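/- arXiv:2409.16854 — 4 statements merged into one kernel-verified Lean document; each statement's English description precedes it below -/
import Mathlib

section
/- The iterated attack aggregation is permutation-invariant: for any real number v0 and any two lists L and L' of weight–score pairs such that L' is a permutation of L, F_att(v0, L) = F_att(v0, L'). -/
/-- Single-step attack aggregation in the QuAM framework. -/
def fAtt (v0 w v : ℝ) : ℝ := v0 - v0 * w * v

/-- Iterated attack aggregation: left fold of `fAtt` over a list of weight–score pairs. -/
def FAtt (v0 : ℝ) (L : List (ℝ × ℝ)) : ℝ :=
  L.foldl (fun acc p => fAtt acc p.1 p.2) v0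

lemma FAtt_eq_prod (v0 : ℝ) (L : List (ℝ × ℝ)) :
    FAtt v0 L = v0 * (L.map (fun p => 1 - p.1 * p.2)).prod := by
  induction L generalizing v0 with
  | nil => simp [FAtt]
  | cons a t ih =>
    simp only [FAtt, List.foldl_cons, List.map_cons, List.prod_cons] at *
    rw [ih]
    simp [fAtt]
    ring

theorem FAtt_perm_invariant (v0 : ℝ) (L L' : List (ℝ × ℝ)) (h : L.Perm L') :
    FAtt v0 L = FAtt v0 L' := by
  rw [FAtt_eq_prod, FAtt_eq_prod, (h.map _).prod_eq]
end

section
/- The iterated support aggregation is permutation-invariant: for any real number v0 and any two lists L and L' of weight–score pairs such that L' is a permutation of L, F_supp(v0, L) = F_supp(v0, L'). -/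
/-- Single-step support aggregation in the QuAM framework. -/
def fSupp (v0 w v : ℝ) : ℝ := v0 + (1 - v0) * w * v

/-- Iterated support aggregation: left fold of `fSupp` over a list of weight–score pairs. -/
def FSupp (v0 : ℝ) (L : List (ℝ × ℝ)) : ℝ :=
  L.foldl (fun acc p => fSupp acc p.1 p.2) v0

theorem FSupp_perm_invariant (v0 : ℝ) (L L' : List (ℝ × ℝ)) (h : L.Perm L') :
    FSupp v0 L = FSupp v0 L' := by
  unfold FSupp
  exact h.foldl_eq' (fun x _ y _ z => by simp only [fSupp]; ring) v0
end

section
/- If a list L of weight–score pairs contains the pair (1, 1) (an attacker with full acceptability attacking through a relation of full weight), then for any real number v0 the iterated attack aggregation satisfies F_att(v0, L) = 0. -/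
lemma FAtt_zero (L : List (ℝ × ℝ)) : FAtt 0 L = 0 := by
  induction L with
  | nil => rfl
  | cons a t ih => simpa [FAtt, fAtt, List.foldl] using ih

theorem FAtt_of_full_attacker (v0 : ℝ) (L : List (ℝ × ℝ))
    (h : ((1:ℝ), (1:ℝ)) ∈ L) : FAtt v0 L = 0 := by
  induction L generalizing v0 with
  | nil => cases h
  | cons a t ih =>
    rcases List.mem_cons.mp h with h1 | h2
    · subst h1
      simpa [FAtt, fAtt, List.foldl] using FAtt_zero t
    · exact ih _ h2
end

section
/- Monotonicity of iterated support aggregation in the base score: fix a list L of weight–score pairs with all entries in [0,1]; then the map v0 ↦ F_supp(v0, L) is monotone nondecreasing on [0,1]. -/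
theorem FSupp_monotoneOn_base (L : List (ℝ × ℝ))
    (hL : ∀ p ∈ L, p.1 ∈ Set.Icc (0:ℝ) 1 ∧ p.2 ∈ Set.Icc (0:ℝ) 1) :
    MonotoneOn (fun v0 => FSupp v0 L) (Set.Icc (0:ℝ) 1) := by
  intro a ha b hb hab
  simp only [FSupp]
  induction L generalizing a b with
  | nil => exact hab
  | cons p t ih =>
    obtain ⟨⟨hw0, hw1⟩, ⟨hv0, hv1⟩⟩ := hL p (by simp)
    obtain ⟨ha0, ha1⟩ := ha
    obtain ⟨hb0, hb1⟩ := hb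
    have hwv0 : 0 ≤ p.1 * p.2 := mul_nonneg hw0 hv0
    have hwv1 : p.1 * p.2 ≤ 1 := mul_le_one₀ hw1 hv0 hv1
    have step : ∀ x : ℝ, fSupp x p.1 p.2 = x * (1 - p.1 * p.2) + p.1 * p.2 := by
      intro x; unfold fSupp; ring
    have hmem : ∀ x : ℝ, 0 ≤ x → x ≤ 1 → fSupp x p.1 p.2 ∈ Set.Icc (0:ℝ) 1 := by
      intro x hx0 hx1
      rw [step]
      constructor
      · have := mul_nonneg hx0 (by linarith : (0:ℝ) ≤ 1 - p.1 * p.2)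
        linarith
      · nlinarith
    have hle : fSupp a p.1 p.2 ≤ fSupp b p.1 p.2 := by
      rw [step, step]
      have := mul_le_mul_of_nonneg_right hab (by linarith : (0:ℝ) ≤ 1 - p.1 * p.2)
      linarith
    exact ih (fun q hq => hL q (List.mem_cons_of_mem _ hq))
      (hmem a ha0 ha1) (hmem b hb0 hb1) hle
end
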